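/- arXiv:1912.00621 — 3 statements merged into one kernel-verified Lean document; each statement's English description precedes it below -/
import Mathlib

section
/- Let C be a Krull-Schmidt, Hom-finite, K-linear triangulated category (K a field) with a cluster tilting subcategory T, and let ψ : K_0(C,0) → K_0(C) be the canonical epimorphism. Suppose Ker(ψ) is generated by the elements [δ] = [X] + [Z] − [Y] of K_0(C,0), where δ : X → Y → Z → X[1] runs through all Auslander-Reiten triangles in C. Then C is locally finite. In particular, if T = add(T) for a cluster tilting object T ∈ C, then Ind(C) is finite. -/
open CategoryTheory CategoryTheory.Limits Opposite ZeroObject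

attribute [local instance] CategoryTheory.Limits.hasBinaryBiproducts_of_finite_biproducts

universe w v u

noncomputable section

/-- An object of a preadditive category with finite biproducts is *indecomposable* if it is
nonzero and admits no nontrivial direct sum decomposition. -/
def Indec {C : Type u} [Category.{v} C] [Preadditive C] [HasFiniteBiproducts C] (X : C) : Prop :=
  ¬ IsZero X ∧ ∀ (Y Z : C), Nonempty (X ≅ Y ⊞ Z) → IsZero Y ∨ IsZero Z

/-- A preadditive category is *Krull-Schmidt* if every object is (isomorphic to) a finite
biproduct of objects having local endomorphism rings. -/
def IsKrullSchmidt (C : Type u) [Category.{v} C] [Preadditive C] [HasFiniteBiproducts C] : Prop :=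
  ∀ X : C, ∃ (n : ℕ) (f : Fin n → C),
    (∀ i, IsLocalRing (CategoryTheory.End (f i))) ∧ Nonempty (X ≅ ⨁ f)

/-- `C` is *locally finite*: for every indecomposable `A` there are, up to isomorphism, only
finitely many indecomposables `B` with `Hom(A, B) ≠ 0`, and only finitely many indecomposables
`B` with `Hom(B, A) ≠ 0`. -/
def LocFinite (C : Type u) [Category.{v} C] [Preadditive C] [HasFiniteBiproducts C] : Prop :=
  ∀ A : C, Indec A →
    (∃ (n : ℕ) (ind : Fin n → C), ∀ B : C, Indec B → (∃ φ : A ⟶ B, φ ≠ 0) →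
        ∃ i, Nonempty (B ≅ ind i)) ∧
    (∃ (n : ℕ) (ind : Fin n → C), ∀ B : C, Indec B → (∃ φ : B ⟶ A, φ ≠ 0) →
        ∃ i, Nonempty (B ≅ ind i))

/-- `X` is a *dense* subcategory: `add X = C`, i.e. every object of `C` is a direct summand
of an object of `X`. -/
def DenseSub {C : Type u} [Category.{v} C] [Preadditive C] [HasFiniteBiproducts C]
    (X : Set C) : Prop :=
  ∀ A : C, ∃ X₀ ∈ X, ∃ B : C, Nonempty (X₀ ≅ A ⊞ B)

/-- `X` is a full additive subcategory closed under isomorphisms (given as a set of objects). -/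
def AddSub (C : Type u) [Category.{v} C] [Preadditive C] [HasFiniteBiproducts C]
    (X : Set C) : Prop :=
  (0 : C) ∈ X ∧ (∀ {A B : C}, A ∈ X → B ∈ X → (A ⊞ B) ∈ X) ∧
    (∀ {A B : C}, A ∈ X → Nonempty (A ≅ B) → B ∈ X)

section K0ZeroDefs

variable (C : Type u) [Category.{v} C] [Preadditive C] [HasFiniteBiproducts C]

/-- The relations `[A] + [B] - [A ⊞ B]` and `[A] - [B]` for `A ≅ B`, defining `K₀(C, 0)`. -/
def relAdd : Set (FreeAbelianGroup C) :=
  {x | (∃ A B : C,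
          x = FreeAbelianGroup.of A + FreeAbelianGroup.of B - FreeAbelianGroup.of (A ⊞ B)) ∨
       (∃ A B : C, Nonempty (A ≅ B) ∧ x = FreeAbelianGroup.of A - FreeAbelianGroup.of B)}

/-- `K₀(C, 0)`: the free abelian group on the isomorphism classes of objects of `C`. -/
abbrev K0Zero := FreeAbelianGroup C ⧸ AddSubgroup.closure (relAdd C)

/-- The class `[A]` of an object `A` in `K₀(C, 0)`. -/
def clsZero (A : C) : K0Zero C := QuotientAddGroup.mk (FreeAbelianGroup.of A)

end K0ZeroDefs

open CategoryTheory.Pretriangulated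

section TriDefs

variable (C : Type u) [Category.{v} C] [Preadditive C] [HasZeroObject C] [HasShift C ℤ]
  [∀ n : ℤ, (shiftFunctor C n).Additive] [Pretriangulated C] [HasFiniteBiproducts C]

/-- `T` is a cluster tilting subcategory of the triangulated category `C`. -/
structure IsClusterTilting (T : Set C) : Prop where
  sum_mem : ∀ {X Y : C}, X ∈ T → Y ∈ T → (X ⊞ Y) ∈ T
  summand_mem : ∀ {X Y Z : C}, Z ∈ T → Nonempty (Z ≅ X ⊞ Y) → X ∈ T
  contravariantly_finite : ∀ X : C, ∃ T₀ ∈ T, ∃ f : T₀ ⟶ X,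
    ∀ T₁ ∈ T, ∀ g : T₁ ⟶ X, ∃ h : T₁ ⟶ T₀, h ≫ f = g
  covariantly_finite : ∀ X : C, ∃ T₀ ∈ T, ∃ f : X ⟶ T₀,
    ∀ T₁ ∈ T, ∀ g : X ⟶ T₁, ∃ h : T₀ ⟶ T₁, f ≫ h = g
  char_left : ∀ X : C, X ∈ T ↔ ∀ T₀ ∈ T, ∀ φ : T₀ ⟶ X⟦(1 : ℤ)⟧, φ = 0
  char_right : ∀ X : C, X ∈ T ↔ ∀ T₀ ∈ T, ∀ φ : X ⟶ T₀⟦(1 : ℤ)⟧, φ = 0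

/-- `X → Y → Z → X[1]` is an Auslander–Reiten triangle: a distinguished triangle with `X, Z`
indecomposable, first map left almost split and second map right almost split. -/
structure IsARTriangle {X Y Z : C} (f : X ⟶ Y) (g : Y ⟶ Z) (h : Z ⟶ X⟦(1 : ℤ)⟧) : Prop where
  distinguished : Triangle.mk f g h ∈ distTriang C
  indec₁ : Indec X
  indec₃ : Indec Z
  not_section : ¬ ∃ r : Y ⟶ X, f ≫ r = 𝟙 X
  left_almost_split : ∀ {X' : C} (u : X ⟶ X'), (¬ ∃ r : X' ⟶ X, u ≫ r = 𝟙 X) →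
    ∃ v : Y ⟶ X', f ≫ v = u
  not_retraction : ¬ ∃ s : Z ⟶ Y, s ≫ g = 𝟙 Z
  right_almost_split : ∀ {W : C} (u : W ⟶ Z), (¬ ∃ s : Z ⟶ W, s ≫ u = 𝟙 Z) →
    ∃ v : W ⟶ Y, v ≫ g = u

/-- The shifted subcategory `T[1]` (closed under isomorphisms). -/
def shiftSet (T : Set C) : Set C := {W | ∃ t ∈ T, Nonempty (W ≅ t⟦(1 : ℤ)⟧)}

/-- `h` factors through an object of `T[1]`. -/
def FactorsThruShift (T : Set C) {Z X : C} (h : Z ⟶ X⟦(1 : ℤ)⟧) : Prop :=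
  ∃ t ∈ T, ∃ (u : Z ⟶ t⟦(1 : ℤ)⟧) (v : t⟦(1 : ℤ)⟧ ⟶ X⟦(1 : ℤ)⟧), u ≫ v = h

/-- The set of elements `[X] + [Z] - [Y]` of `K₀(C, 0)` for all distinguished triangles. -/
def triRel : Set (K0Zero C) :=
  {x | ∃ T : Triangle C, T ∈ (distTriang C) ∧
        x = clsZero C T.obj₁ + clsZero C T.obj₃ - clsZero C T.obj₂}

/-- The Grothendieck group `K₀(C)` of the triangulated category `C`. -/
abbrev K0Tri := K0Zero C ⧸ AddSubgroup.closure (triRel C)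

/-- The canonical epimorphism `ψ : K₀(C, 0) → K₀(C)`. -/
def psiTri : K0Zero C →+ K0Tri C := QuotientAddGroup.mk' _

/-- The class `[A]` of an object `A` in `K₀(C)`. -/
def k0clsTri (A : C) : K0Tri C := psiTri C (clsZero C A)

/-- The relations `[X] + [Z] - [Y]` for triangles `X → Y → Z --h--> X[1]` with `h` factoring
through an object of `T[1]`. -/
def relTriRel (T : Set C) : Set (K0Zero C) :=
  {x | ∃ Tr : Triangle C, Tr ∈ (distTriang C) ∧ FactorsThruShift C T Tr.mor₃ ∧
        x = clsZero C Tr.obj₁ + clsZero C Tr.obj₃ - clsZero C Tr.obj₂}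

/-- The relative Grothendieck group `K₀(C, T)`. -/
abbrev K0RelTri (T : Set C) := K0Zero C ⧸ AddSubgroup.closure (relTriRel C T)

/-- The canonical projection `g : K₀(C, 0) → K₀(C, T)`. -/
def gProj (T : Set C) : K0Zero C →+ K0RelTri C T := QuotientAddGroup.mk' _

/-- The set of elements `[δ] = [X] + [Z] - [Y]` of `K₀(C, 0)` arising from Auslander–Reiten
triangles `X → Y → Z → X[1]`; for the AR triangle starting at `X` this is `[l_X]`. -/
def arRelTri : Set (K0Zero C) :=
  {x | ∃ (X Y Z : C) (f : X ⟶ Y) (g : Y ⟶ Z) (h : Z ⟶ X⟦(1 : ℤ)⟧),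
        IsARTriangle C f g h ∧ x = clsZero C X + clsZero C Z - clsZero C Y}

/-- The set of elements `[l_X]` for `X ∈ Ind(C) \ T[1]`. -/
def arRelTriOff (T : Set C) : Set (K0Zero C) :=
  {x | ∃ (X Y Z : C) (f : X ⟶ Y) (g : Y ⟶ Z) (h : Z ⟶ X⟦(1 : ℤ)⟧),
        IsARTriangle C f g h ∧ X ∉ shiftSet C T ∧
        x = clsZero C X + clsZero C Z - clsZero C Y}

/-- `C` has Auslander–Reiten triangles: every indecomposable `X` admits an Auslander–Reiten
triangle `X → Y → τ⁻¹X → X[1]`. -/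
def HasARTriangles : Prop :=
  ∀ X : C, Indec X →
    ∃ (Y Z : C) (f : X ⟶ Y) (g : Y ⟶ Z) (h : Z ⟶ X⟦(1 : ℤ)⟧), IsARTriangle C f g h

/-- `add T₀`: the objects isomorphic to direct summands of finite direct sums of copies
of `T₀`. -/
def addSet (T₀ : C) : Set C :=
  {X | ∃ (n : ℕ) (Y : C), Nonempty ((⨁ fun _ : Fin n => T₀) ≅ X ⊞ Y)}

/-- `Ind(C)` is finite: there are finitely many indecomposables up to isomorphism. -/
def FinitelyManyIndec : Prop :=
  ∃ (n : ℕ) (ind : Fin n → C), ∀ X : C, Indec X → ∃ i, Nonempty (X ≅ ind i)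

end TriDefs

/-! ### Auxiliary lemmas -/

section AuxAdd

variable {C : Type u} [Category.{v} C] [Preadditive C] [HasFiniteBiproducts C]

lemma isZero_snd_of_idem_eq_one {X W V : C} (β : X ≅ W ⊞ V)
    (h1 : β.hom ≫ biprod.fst ≫ biprod.inl ≫ β.inv = 𝟙 X) :
    IsZero V := by
  rw [IsZero.iff_id_eq_zero]
  have h2 : 𝟙 V = biprod.inr ≫ β.inv ≫ 𝟙 X ≫ β.hom ≫ biprod.snd := by simp
  rw [← h1] at h2
  simpa using h2

lemma indec_of_isLocalRing (X : C) (hX : IsLocalRing (CategoryTheory.End X)) : Indec X := by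
  haveI := hX
  constructor
  · intro hz
    obtain ⟨a, b, hab⟩ := exists_pair_ne (CategoryTheory.End X)
    exact hab (hz.eq_of_src a b)
  · rintro Y Z ⟨α⟩
    set e : CategoryTheory.End X := α.hom ≫ biprod.fst ≫ biprod.inl ≫ α.inv with he
    set e₂ : CategoryTheory.End X := α.hom ≫ biprod.snd ≫ biprod.inr ≫ α.inv with he₂
    have hee : e * e = e := by
      show e ≫ e = e
      rw [he]
      simp
    have hee₂ : e₂ * e₂ = e₂ := by
      show e₂ ≫ e₂ = e₂
      rw [he₂]
      simp
    have hsum : e + e₂ = 1 := by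
      show (α.hom ≫ biprod.fst ≫ biprod.inl ≫ α.inv) +
        (α.hom ≫ biprod.snd ≫ biprod.inr ≫ α.inv) = 𝟙 X
      rw [← Preadditive.comp_add]
      rw [show biprod.fst ≫ biprod.inl ≫ α.inv + biprod.snd ≫ biprod.inr ≫ α.inv
        = (biprod.fst ≫ biprod.inl + biprod.snd ≫ biprod.inr) ≫ α.inv by
          rw [Preadditive.add_comp, Category.assoc, Category.assoc]]
      rw [biprod.total]
      simp
    rcases IsLocalRing.isUnit_or_isUnit_of_add_one hsum with hu | hu
    · right
      have h1 : e = 1 := hu.mul_left_cancel (by rw [hee, mul_one])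
      exact isZero_snd_of_idem_eq_one α h1
    · left
      have h1 : e₂ = 1 := hu.mul_left_cancel (by rw [hee₂, mul_one])
      apply isZero_snd_of_idem_eq_one (α ≪≫ biprod.braiding Y Z)
      have hil : (biprod.inl : Z ⟶ Z ⊞ Y) ≫ biprod.lift biprod.snd biprod.fst
          = (biprod.inr : Z ⟶ Y ⊞ Z) := by
        apply biprod.hom_ext <;> simp
      have h2 : (α ≪≫ biprod.braiding Y Z).hom ≫ biprod.fst ≫ biprod.inl ≫
          (α ≪≫ biprod.braiding Y Z).inv = e₂ := by
        rw [he₂]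
        simp [biprod.braiding, reassoc_of% hil]
      rw [h2]
      exact h1

/-- Transport of the right-almost-split factorization property along an equivalence. -/
lemma ras_transport (E : C ≌ C) {Y Z : C} (g : Y ⟶ Z)
    (H : ∀ {W : C} (u : W ⟶ Z), (¬ ∃ s : Z ⟶ W, s ≫ u = 𝟙 Z) → ∃ v : W ⟶ Y, v ≫ g = u)
    {W : C} (u : W ⟶ E.functor.obj Z)
    (hu : ¬ ∃ s : E.functor.obj Z ⟶ W, s ≫ u = 𝟙 (E.functor.obj Z)) :
    ∃ v : W ⟶ E.functor.obj Y, v ≫ E.functor.map g = u := by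
  have hnat1 : E.counit.app W ≫ u
      = E.functor.map (E.inverse.map u) ≫ E.counit.app (E.functor.obj Z) := by
    simpa using (E.counit.naturality u).symm
  have hnat2 : u ≫ E.counitInv.app (E.functor.obj Z)
      = E.counitInv.app W ≫ E.functor.map (E.inverse.map u) := by
    simpa using E.counitInv.naturality u
  have hub : ¬ ∃ sb : Z ⟶ E.inverse.obj W,
      sb ≫ (E.inverse.map u ≫ E.unitInv.app Z) = 𝟙 Z := by
    rintro ⟨sb, hsb⟩
    apply hu
    refine ⟨E.functor.map sb ≫ E.counit.app W, ?_⟩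
    have h1 : sb ≫ E.inverse.map u = E.unit.app Z := by
      have h2 := congrArg (fun t => t ≫ E.unit.app Z) hsb
      simpa [Category.assoc] using h2
    calc (E.functor.map sb ≫ E.counit.app W) ≫ u
        = E.functor.map sb ≫ E.counit.app W ≫ u := by rw [Category.assoc]
      _ = E.functor.map sb ≫ E.functor.map (E.inverse.map u) ≫
            E.counit.app (E.functor.obj Z) := by rw [hnat1]
      _ = E.functor.map (sb ≫ E.inverse.map u) ≫ E.counit.app (E.functor.obj Z) := by
            rw [CategoryTheory.Functor.map_comp, Category.assoc]
      _ = E.functor.map (E.unit.app Z) ≫ E.counit.app (E.functor.obj Z) := by rw [h1]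
      _ = 𝟙 (E.functor.obj Z) := E.functor_unit_comp Z
  obtain ⟨vb, hvb⟩ := H (E.inverse.map u ≫ E.unitInv.app Z) hub
  refine ⟨E.counitInv.app W ≫ E.functor.map vb, ?_⟩
  calc (E.counitInv.app W ≫ E.functor.map vb) ≫ E.functor.map g
      = E.counitInv.app W ≫ E.functor.map (vb ≫ g) := by
        rw [Category.assoc, CategoryTheory.Functor.map_comp]
    _ = E.counitInv.app W ≫ E.functor.map (E.inverse.map u) ≫
          E.functor.map (E.unitInv.app Z) := by rw [hvb, CategoryTheory.Functor.map_comp]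
    _ = (E.counitInv.app W ≫ E.functor.map (E.inverse.map u)) ≫
          E.functor.map (E.unitInv.app Z) := by rw [Category.assoc]
    _ = (u ≫ E.counitInv.app (E.functor.obj Z)) ≫ E.functor.map (E.unitInv.app Z) := by
          rw [hnat2]
    _ = u ≫ E.counitInv.app (E.functor.obj Z) ≫ E.functor.map (E.unitInv.app Z) := by
          rw [Category.assoc]
    _ = u := by rw [E.counitInv_functor_comp, Category.comp_id]

/-- Transport of the left-almost-split factorization property along an equivalence. -/
lemma las_transport (E : C ≌ C) {X Y : C} (f : X ⟶ Y)
    (H : ∀ {W : C} (u : X ⟶ W), (¬ ∃ r : W ⟶ X, u ≫ r = 𝟙 X) → ∃ v : Y ⟶ W, f ≫ v = u)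
    {W : C} (u : E.functor.obj X ⟶ W)
    (hu : ¬ ∃ r : W ⟶ E.functor.obj X, u ≫ r = 𝟙 (E.functor.obj X)) :
    ∃ v : E.functor.obj Y ⟶ W, E.functor.map f ≫ v = u := by
  have hnat1 : u ≫ E.counitInv.app W
      = E.counitInv.app (E.functor.obj X) ≫ E.functor.map (E.inverse.map u) := by
    simpa using E.counitInv.naturality u
  have hnat2 : E.counit.app (E.functor.obj X) ≫ u
      = E.functor.map (E.inverse.map u) ≫ E.counit.app W := by
    simpa using (E.counit.naturality u).symm
  have hub : ¬ ∃ rb : E.inverse.obj W ⟶ X,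
      (E.unit.app X ≫ E.inverse.map u) ≫ rb = 𝟙 X := by
    rintro ⟨rb, hrb⟩
    apply hu
    refine ⟨E.counitInv.app W ≫ E.functor.map rb, ?_⟩
    have h1 : E.inverse.map u ≫ rb = E.unitInv.app X := by
      rw [Category.assoc] at hrb
      have h2 := congrArg (fun t => E.unitInv.app X ≫ t) hrb
      simpa [Category.assoc] using h2
    calc u ≫ E.counitInv.app W ≫ E.functor.map rb
        = (u ≫ E.counitInv.app W) ≫ E.functor.map rb := by rw [Category.assoc]
      _ = (E.counitInv.app (E.functor.obj X) ≫ E.functor.map (E.inverse.map u)) ≫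
            E.functor.map rb := by rw [hnat1]
      _ = E.counitInv.app (E.functor.obj X) ≫ E.functor.map (E.inverse.map u ≫ rb) := by
            rw [Category.assoc, CategoryTheory.Functor.map_comp]
      _ = E.counitInv.app (E.functor.obj X) ≫ E.functor.map (E.unitInv.app X) := by rw [h1]
      _ = 𝟙 (E.functor.obj X) := E.counitInv_functor_comp X
  obtain ⟨vb, hvb⟩ := H (E.unit.app X ≫ E.inverse.map u) hub
  refine ⟨E.functor.map vb ≫ E.counit.app W, ?_⟩
  calc E.functor.map f ≫ E.functor.map vb ≫ E.counit.app W
      = E.functor.map (f ≫ vb) ≫ E.counit.app W := by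
        rw [← Category.assoc, ← CategoryTheory.Functor.map_comp]
    _ = E.functor.map (E.unit.app X ≫ E.inverse.map u) ≫ E.counit.app W := by rw [hvb]
    _ = E.functor.map (E.unit.app X) ≫ E.functor.map (E.inverse.map u) ≫
          E.counit.app W := by rw [CategoryTheory.Functor.map_comp, Category.assoc]
    _ = E.functor.map (E.unit.app X) ≫ E.counit.app (E.functor.obj X) ≫ u := by
          rw [hnat2]
    _ = (E.functor.map (E.unit.app X) ≫ E.counit.app (E.functor.obj X)) ≫ u := by
          rw [Category.assoc]
    _ = u := by rw [(E.functor_unit_comp X : E.functor.map (E.unit.app X) ≫ E.counit.app (E.functor.obj X) = 𝟙 _)]; simp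

/-- Indecomposability transports along additive self-equivalences. -/
lemma indec_equiv (E : C ≌ C) [E.functor.Additive] [E.inverse.Additive] {X : C}
    (hX : Indec X) : Indec (E.functor.obj X) := by
  haveI : PreservesBinaryBiproducts E.functor :=
    Limits.preservesBinaryBiproducts_of_preservesBiproducts E.functor
  haveI : PreservesBinaryBiproducts E.inverse :=
    Limits.preservesBinaryBiproducts_of_preservesBiproducts E.inverse
  constructor
  · intro hz
    exact hX.1 ((E.inverse.map_isZero hz).of_iso (E.unitIso.app X))
  · rintro Y Z ⟨i⟩
    have j : X ≅ E.inverse.obj Y ⊞ E.inverse.obj Z :=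
      E.unitIso.app X ≪≫ E.inverse.mapIso i ≪≫ E.inverse.mapBiprod Y Z
    rcases hX.2 _ _ ⟨j⟩ with hz | hz
    · exact Or.inl ((E.functor.map_isZero hz).of_iso (E.counitIso.app Y).symm)
    · exact Or.inr ((E.functor.map_isZero hz).of_iso (E.counitIso.app Z).symm)

end AuxAdd

section AuxTri

variable {C : Type u} [Category.{v} C] [Preadditive C] [HasZeroObject C] [HasShift C ℤ]
  [∀ n : ℤ, (shiftFunctor C n).Additive] [Pretriangulated C] [HasFiniteBiproducts C]

/-- Exactness of `Hom(-, W)` at the middle of a distinguished triangle, with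
defeq-normalized statement. -/
lemma yoneda_exact₂' {X Y Z : C} {f : X ⟶ Y} {g : Y ⟶ Z} {h : Z ⟶ X⟦(1 : ℤ)⟧}
    (hT : Triangle.mk f g h ∈ distTriang C) {W : C} (a : Y ⟶ W) (ha : f ≫ a = 0) :
    ∃ b : Z ⟶ W, a = g ≫ b :=
  Pretriangulated.Triangle.yoneda_exact₂ _ hT a ha

lemma yoneda_exact₃' {X Y Z : C} {f : X ⟶ Y} {g : Y ⟶ Z} {h : Z ⟶ X⟦(1 : ℤ)⟧}
    (hT : Triangle.mk f g h ∈ distTriang C) {W : C} (a : Z ⟶ W) (ha : g ≫ a = 0) :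
    ∃ b : X⟦(1 : ℤ)⟧ ⟶ W, a = h ≫ b :=
  Pretriangulated.Triangle.yoneda_exact₂ _ (Pretriangulated.rot_of_distTriang _ hT) a ha

lemma coyoneda_exact₂' {X Y Z : C} {f : X ⟶ Y} {g : Y ⟶ Z} {h : Z ⟶ X⟦(1 : ℤ)⟧}
    (hT : Triangle.mk f g h ∈ distTriang C) {W : C} (a : W ⟶ Y) (ha : a ≫ g = 0) :
    ∃ b : W ⟶ X, a = b ≫ f :=
  Pretriangulated.Triangle.coyoneda_exact₂ _ hT a ha

lemma coyoneda_exact₁' {X Y Z : C} {f : X ⟶ Y} {g : Y ⟶ Z} {h : Z ⟶ X⟦(1 : ℤ)⟧}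
    (hT : Triangle.mk f g h ∈ distTriang C) {W : C} (a : W ⟶ X) (ha : a ≫ f = 0) :
    ∃ b : W ⟶ Z⟦(-1 : ℤ)⟧,
      a = b ≫ (-h⟦(-1 : ℤ)⟧' ≫ (shiftEquiv C (1 : ℤ)).unitIso.inv.app X) :=
  Pretriangulated.Triangle.coyoneda_exact₂ _ (Pretriangulated.inv_rot_of_distTriang _ hT) a ha

/-- A split monomorphism in a pretriangulated category exhibits its target as a
biproduct. -/
lemma biprod_of_splitMono {X B : C} (u : X ⟶ B) (r : B ⟶ X) (hur : u ≫ r = 𝟙 X) :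
    ∃ Q : C, Nonempty (B ≅ X ⊞ Q) := by
  obtain ⟨Q, p, w, hT⟩ := Pretriangulated.distinguished_cocone_triangle u
  have hup : u ≫ p = 0 := Pretriangulated.comp_distTriang_mor_zero₁₂ _ hT
  have hw : w = 0 := by
    have h3 : w ≫ u⟦(1 : ℤ)⟧' = 0 := Pretriangulated.comp_distTriang_mor_zero₃₁ _ hT
    calc w = w ≫ (u ≫ r)⟦(1 : ℤ)⟧' := by rw [hur, CategoryTheory.Functor.map_id, Category.comp_id]
      _ = (w ≫ u⟦(1 : ℤ)⟧') ≫ r⟦(1 : ℤ)⟧' := by rw [CategoryTheory.Functor.map_comp, Category.assoc]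
      _ = 0 := by rw [h3, zero_comp]
  have hue : u ≫ (𝟙 B - r ≫ u) = 0 := by
    rw [Preadditive.comp_sub, Category.comp_id, ← Category.assoc, hur, Category.id_comp,
      sub_self]
  obtain ⟨q, hq⟩ := yoneda_exact₂' hT (𝟙 B - r ≫ u) hue
  have he2 : (𝟙 B - r ≫ u) ≫ r = 0 := by
    rw [Preadditive.sub_comp, Category.id_comp, Category.assoc, hur, Category.comp_id,
      sub_self]
  have hep : (𝟙 B - r ≫ u) ≫ p = p := by
    rw [Preadditive.sub_comp, Category.id_comp, Category.assoc, hup, comp_zero, sub_zero]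
  have hpα : p ≫ (𝟙 Q - q ≫ p) = 0 := by
    rw [Preadditive.comp_sub, Category.comp_id, ← Category.assoc, ← hq, hep, sub_self]
  obtain ⟨β, hβ⟩ := yoneda_exact₃' hT (𝟙 Q - q ≫ p) hpα
  have hqp : q ≫ p = 𝟙 Q := by
    have h0 : 𝟙 Q - q ≫ p = 0 := by
      rw [hβ, hw, zero_comp]
    rw [← sub_eq_zero]
    rw [sub_eq_zero] at h0 ⊢
    exact h0.symm
  have hee : (𝟙 B - r ≫ u) ≫ (𝟙 B - r ≫ u) = 𝟙 B - r ≫ u := by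
    rw [Preadditive.comp_sub, Category.comp_id, ← Category.assoc, he2, zero_comp, sub_zero]
  refine ⟨Q, ⟨⟨biprod.lift r p, biprod.desc u (q ≫ (𝟙 B - r ≫ u)), ?_, ?_⟩⟩⟩
  · rw [biprod.lift_desc, ← Category.assoc, ← hq, hee]
    abel
  · apply biprod.hom_ext' <;> apply biprod.hom_ext <;>
      simp [hur, hup, hqp]

lemma iso_of_splitMono_indec {X B : C} (hB : Indec B) (u : X ⟶ B) (r : B ⟶ X)
    (hur : u ≫ r = 𝟙 X) (hX : ¬ IsZero X) : Nonempty (B ≅ X) := by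
  obtain ⟨Q, ⟨i⟩⟩ := biprod_of_splitMono u r hur
  rcases hB.2 _ _ ⟨i⟩ with hz | hz
  · exact absurd hz hX
  · refine ⟨i ≪≫ ⟨biprod.fst, biprod.inl, ?_, biprod.inl_fst⟩⟩
    apply biprod.hom_ext'
    · simp
    · apply (hz.eq_of_src _ _)

end AuxTri

section AuxDefect

variable {C : Type u} [Category.{v} C] [Preadditive C] [HasZeroObject C] [HasShift C ℤ]
  [∀ n : ℤ, (shiftFunctor C n).Additive] [Pretriangulated C] [HasFiniteBiproducts C]

lemma indec_shift (n : ℤ) {X : C} (hX : Indec X) : Indec (X⟦n⟧) := by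
  haveI h1 : (shiftEquiv C n).functor.Additive :=
    (inferInstance : (shiftFunctor C n).Additive)
  haveI h2 : (shiftEquiv C n).inverse.Additive :=
    (inferInstance : (shiftFunctor C (-n)).Additive)
  exact indec_equiv (shiftEquiv C n) hX

lemma ras_shift (n : ℤ) {Y Z : C} (g : Y ⟶ Z)
    (H : ∀ {W : C} (u : W ⟶ Z), (¬ ∃ s : Z ⟶ W, s ≫ u = 𝟙 Z) → ∃ v : W ⟶ Y, v ≫ g = u)
    {W : C} (u : W ⟶ Z⟦n⟧) (hu : ¬ ∃ s : Z⟦n⟧ ⟶ W, s ≫ u = 𝟙 (Z⟦n⟧)) :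
    ∃ v : W ⟶ Y⟦n⟧, v ≫ g⟦n⟧' = u :=
  ras_transport (shiftEquiv C n) g H u hu

lemma las_shift (n : ℤ) {X Y : C} (f : X ⟶ Y)
    (H : ∀ {W : C} (u : X ⟶ W), (¬ ∃ r : W ⟶ X, u ≫ r = 𝟙 X) → ∃ v : Y ⟶ W, f ≫ v = u)
    {W : C} (u : X⟦n⟧ ⟶ W) (hu : ¬ ∃ r : W ⟶ X⟦n⟧, u ≫ r = 𝟙 (X⟦n⟧)) :
    ∃ v : Y⟦n⟧ ⟶ W, f⟦n⟧' ≫ v = u :=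
  las_transport (shiftEquiv C n) f H u hu

variable (K : Type w) [Field K] [Linear K C]

/-- Covariant defect formula: for an AR triangle `X → Y → Z → X[1]` and an indecomposable
`B` not isomorphic to `X` nor `X[1]`, the functor `Hom(-, B)` is exact on the triangle. -/
lemma defect_cov (homFin : ∀ X Y : C, FiniteDimensional K (X ⟶ Y))
    {X Y Z : C} {f : X ⟶ Y} {g : Y ⟶ Z} {h : Z ⟶ X⟦(1 : ℤ)⟧}
    (hAR : IsARTriangle C f g h) (B : C) (hB : Indec B)
    (h1 : ¬ Nonempty (B ≅ X)) (h2 : ¬ Nonempty (B ≅ X⟦(1 : ℤ)⟧)) :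
    Module.finrank K (X ⟶ B) + Module.finrank K (Z ⟶ B) = Module.finrank K (Y ⟶ B) := by
  haveI := homFin X B
  haveI := homFin Y B
  haveI := homFin Z B
  have hdT := hAR.distinguished
  set G1 : (Y ⟶ B) →ₗ[K] (X ⟶ B) := Linear.leftComp K B f with hG1
  set G2 : (Z ⟶ B) →ₗ[K] (Y ⟶ B) := Linear.leftComp K B g with hG2
  have hsurj : Function.Surjective G1 := by
    intro u
    by_cases hs : ∃ r : B ⟶ X, u ≫ r = 𝟙 X
    · exfalso
      obtain ⟨r, hr⟩ := hs
      exact h1 (iso_of_splitMono_indec hB u r hr hAR.indec₁.1)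
    · obtain ⟨v, hv⟩ := hAR.left_almost_split u hs
      exact ⟨v, hv⟩
  have hinj : Function.Injective G2 := by
    rw [← LinearMap.ker_eq_bot, LinearMap.ker_eq_bot']
    intro v hv
    have hv' : g ≫ v = 0 := hv
    obtain ⟨b, hb'⟩ := yoneda_exact₃' hdT v hv'
    by_cases hs : ∃ r : B ⟶ X⟦(1 : ℤ)⟧, b ≫ r = 𝟙 (X⟦(1 : ℤ)⟧)
    · exfalso
      obtain ⟨r, hr⟩ := hs
      exact h2 (iso_of_splitMono_indec hB b r hr (indec_shift (1 : ℤ) hAR.indec₁).1)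
    · obtain ⟨v', hv'⟩ := las_shift (1 : ℤ) f hAR.left_almost_split b hs
      have hhf : h ≫ f⟦(1 : ℤ)⟧' = 0 := Pretriangulated.comp_distTriang_mor_zero₃₁ _ hdT
      rw [hb', ← hv', ← Category.assoc, hhf, zero_comp]
  have hkr : LinearMap.ker G1 = LinearMap.range G2 := by
    apply le_antisymm
    · intro u hu
      have hu' : f ≫ u = 0 := LinearMap.mem_ker.mp hu
      obtain ⟨b, hb'⟩ := yoneda_exact₂' hdT u hu'
      exact ⟨b, hb'.symm⟩
    · rintro u ⟨v, rfl⟩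
      apply LinearMap.mem_ker.mpr
      show f ≫ (g ≫ v) = 0
      have h12 : f ≫ g = 0 := Pretriangulated.comp_distTriang_mor_zero₁₂ _ hdT
      rw [← Category.assoc, h12, zero_comp]
  have e1 := LinearMap.finrank_range_add_finrank_ker G1
  have e2 : Module.finrank K (LinearMap.range G1) = Module.finrank K (X ⟶ B) := by
    rw [LinearMap.range_eq_top.mpr hsurj]
    exact finrank_top K _
  have e3 : Module.finrank K (LinearMap.ker G1) = Module.finrank K (Z ⟶ B) := by
    rw [hkr]
    exact LinearMap.finrank_range_of_inj hinj
  omega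

/-- Contravariant defect formula: for an AR triangle `X → Y → Z → X[1]` and an indecomposable
`B` not isomorphic to `Z` nor `Z[-1]`, the functor `Hom(B, -)` is exact on the triangle. -/
lemma defect_con (homFin : ∀ X Y : C, FiniteDimensional K (X ⟶ Y))
    {X Y Z : C} {f : X ⟶ Y} {g : Y ⟶ Z} {h : Z ⟶ X⟦(1 : ℤ)⟧}
    (hAR : IsARTriangle C f g h) (B : C) (hB : Indec B)
    (h1 : ¬ Nonempty (B ≅ Z)) (h2 : ¬ Nonempty (B ≅ Z⟦(-1 : ℤ)⟧)) :
    Module.finrank K (B ⟶ X) + Module.finrank K (B ⟶ Z) = Module.finrank K (B ⟶ Y) := by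
  haveI := homFin B X
  haveI := homFin B Y
  haveI := homFin B Z
  have hdT := hAR.distinguished
  set F1 : (B ⟶ X) →ₗ[K] (B ⟶ Y) := Linear.rightComp K B f with hF1
  set F2 : (B ⟶ Y) →ₗ[K] (B ⟶ Z) := Linear.rightComp K B g with hF2
  have hsurj : Function.Surjective F2 := by
    intro u
    by_cases hs : ∃ s : Z ⟶ B, s ≫ u = 𝟙 Z
    · exfalso
      obtain ⟨s, hsu⟩ := hs
      exact h1 (iso_of_splitMono_indec hB s u hsu hAR.indec₃.1)
    · obtain ⟨v, hv⟩ := hAR.right_almost_split u hs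
      exact ⟨v, hv⟩
  have hinj : Function.Injective F1 := by
    rw [← LinearMap.ker_eq_bot, LinearMap.ker_eq_bot']
    intro v hv
    have hv' : v ≫ f = 0 := hv
    obtain ⟨b, hb'⟩ := coyoneda_exact₁' hdT v hv'
    by_cases hs : ∃ s : Z⟦(-1 : ℤ)⟧ ⟶ B, s ≫ b = 𝟙 (Z⟦(-1 : ℤ)⟧)
    · exfalso
      obtain ⟨s, hsb⟩ := hs
      exact h2 (iso_of_splitMono_indec hB s b hsb (indec_shift (-1 : ℤ) hAR.indec₃).1)
    · obtain ⟨v', hv'⟩ := ras_shift (-1 : ℤ) g hAR.right_almost_split b hs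
      have h23 : g ≫ h = 0 := Pretriangulated.comp_distTriang_mor_zero₂₃ _ hdT
      have hgh : g⟦(-1 : ℤ)⟧' ≫ h⟦(-1 : ℤ)⟧' = 0 := by
        rw [← CategoryTheory.Functor.map_comp, h23, CategoryTheory.Functor.map_zero]
      have hz : g⟦(-1 : ℤ)⟧' ≫ (-h⟦(-1 : ℤ)⟧' ≫ (shiftEquiv C (1 : ℤ)).unitIso.inv.app X)
          = 0 := by
        rw [Preadditive.comp_neg, neg_eq_zero]
        exact (Category.assoc _ _ _).symm.trans (by rw [hgh]; exact zero_comp)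
      rw [hb', ← hv', Category.assoc, hz, comp_zero]
  have hkr : LinearMap.ker F2 = LinearMap.range F1 := by
    apply le_antisymm
    · intro u hu
      have hu' : u ≫ g = 0 := LinearMap.mem_ker.mp hu
      obtain ⟨b, hb'⟩ := coyoneda_exact₂' hdT u hu'
      exact ⟨b, hb'.symm⟩
    · rintro u ⟨v, rfl⟩
      apply LinearMap.mem_ker.mpr
      show (v ≫ f) ≫ g = 0
      have h12 : f ≫ g = 0 := Pretriangulated.comp_distTriang_mor_zero₁₂ _ hdT
      rw [Category.assoc, h12, comp_zero]
  have e1 := LinearMap.finrank_range_add_finrank_ker F2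
  have e2 : Module.finrank K (LinearMap.range F2) = Module.finrank K (B ⟶ Z) := by
    rw [LinearMap.range_eq_top.mpr hsurj]
    exact finrank_top K _
  have e3 : Module.finrank K (LinearMap.ker F2) = Module.finrank K (B ⟶ X) := by
    rw [hkr]
    exact LinearMap.finrank_range_of_inj hinj
  omega

end AuxDefect

section AuxEval

variable {C : Type u} [Category.{v} C] [Preadditive C] [HasFiniteBiproducts C]

/-- Produce a finite list of indecomposables supporting an element of the closure of a set,
relative to a family of evaluation homomorphisms. -/
lemma list_of_mem_closure (s : Set (K0Zero C)) (ev : C → (K0Zero C →+ ℤ))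
    (hgen : ∀ y ∈ s, ∃ (n : ℕ) (L : Fin n → C), ∀ B : C, Indec B → ev B y ≠ 0 →
      ∃ i, Nonempty (B ≅ L i))
    {x : K0Zero C} (hx : x ∈ AddSubgroup.closure s) :
    ∃ (n : ℕ) (L : Fin n → C), ∀ B : C, Indec B → ev B x ≠ 0 →
      ∃ i, Nonempty (B ≅ L i) := by
  induction hx using AddSubgroup.closure_induction with
  | mem y hy => exact hgen y hy
  | zero => exact ⟨0, Fin.elim0, fun B _ hne => absurd (map_zero (ev B)) hne⟩
  | add a b ha hb iha ihb =>
    obtain ⟨n, L, hL⟩ := iha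
    obtain ⟨p, M, hM⟩ := ihb
    refine ⟨n + p, Fin.append L M, fun B hB hne => ?_⟩
    have : ev B a ≠ 0 ∨ ev B b ≠ 0 := by
      by_contra hcon
      push_neg at hcon
      apply hne
      rw [map_add, hcon.1, hcon.2, add_zero]
    rcases this with hh | hh
    · obtain ⟨i, hi⟩ := hL B hB hh
      exact ⟨Fin.castAdd p i, by rwa [Fin.append_left]⟩
    · obtain ⟨i, hi⟩ := hM B hB hh
      exact ⟨Fin.natAdd n i, by rwa [Fin.append_right]⟩
  | neg a ha ih =>
    obtain ⟨n, L, hL⟩ := ih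
    exact ⟨n, L, fun B hB hne => hL B hB (by simpa using hne)⟩

variable (K : Type w) [Field K] [Linear K C]

lemma finrank_hom_biprod_left (homFin : ∀ X Y : C, FiniteDimensional K (X ⟶ Y))
    (A₁ A₂ B : C) :
    Module.finrank K ((A₁ ⊞ A₂ : C) ⟶ B)
      = Module.finrank K (A₁ ⟶ B) + Module.finrank K (A₂ ⟶ B) := by
  haveI := homFin A₁ B
  haveI := homFin A₂ B
  have e : ((A₁ ⊞ A₂ : C) ⟶ B) ≃ₗ[K] (A₁ ⟶ B) × (A₂ ⟶ B) :=
    { toFun := fun u => (biprod.inl ≫ u, biprod.inr ≫ u)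
      map_add' := fun u v => by simp [Prod.ext_iff]
      map_smul' := fun c u => by simp [Prod.ext_iff]
      invFun := fun p => biprod.desc p.1 p.2
      left_inv := fun u => by apply biprod.hom_ext' <;> simp
      right_inv := fun p => by simp }
  rw [e.finrank_eq, Module.finrank_prod]

lemma finrank_hom_biprod_right (homFin : ∀ X Y : C, FiniteDimensional K (X ⟶ Y))
    (B A₁ A₂ : C) :
    Module.finrank K (B ⟶ (A₁ ⊞ A₂ : C))
      = Module.finrank K (B ⟶ A₁) + Module.finrank K (B ⟶ A₂) := by
  haveI := homFin B A₁
  haveI := homFin B A₂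
  have e : (B ⟶ (A₁ ⊞ A₂ : C)) ≃ₗ[K] (B ⟶ A₁) × (B ⟶ A₂) :=
    { toFun := fun u => (u ≫ biprod.fst, u ≫ biprod.snd)
      map_add' := fun u v => by simp [Prod.ext_iff]
      map_smul' := fun c u => by simp [Prod.ext_iff]
      invFun := fun p => biprod.lift p.1 p.2
      left_inv := fun u => by apply biprod.hom_ext <;> simp
      right_inv := fun p => by simp }
  rw [e.finrank_eq, Module.finrank_prod]

/-- The covariant evaluation `[W] ↦ dim Hom(W, B)` on `K₀(C, 0)`. -/
noncomputable def covEval (homFin : ∀ X Y : C, FiniteDimensional K (X ⟶ Y)) (B : C) :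
    K0Zero C →+ ℤ :=
  QuotientAddGroup.lift _
    (FreeAbelianGroup.lift fun W : C => (Module.finrank K (W ⟶ B) : ℤ))
    (by
      have hle : AddSubgroup.closure (relAdd C) ≤
          (FreeAbelianGroup.lift fun W : C => (Module.finrank K (W ⟶ B) : ℤ)).ker := by
        rw [AddSubgroup.closure_le]
        rintro x (⟨A₁, A₂, rfl⟩ | ⟨A₁, A₂, ⟨i⟩, rfl⟩)
        · simp only [SetLike.mem_coe, AddMonoidHom.mem_ker, map_add, map_sub,
            FreeAbelianGroup.lift_apply_of]
          rw [finrank_hom_biprod_left K homFin A₁ A₂ B]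
          push_cast
          ring
        · simp only [SetLike.mem_coe, AddMonoidHom.mem_ker, map_sub,
            FreeAbelianGroup.lift_apply_of]
          rw [(Linear.homCongr K i (Iso.refl B)).finrank_eq]
          ring
      exact fun x hx => hle hx)

/-- The contravariant evaluation `[W] ↦ dim Hom(B, W)` on `K₀(C, 0)`. -/
noncomputable def conEval (homFin : ∀ X Y : C, FiniteDimensional K (X ⟶ Y)) (B : C) :
    K0Zero C →+ ℤ :=
  QuotientAddGroup.lift _
    (FreeAbelianGroup.lift fun W : C => (Module.finrank K (B ⟶ W) : ℤ))
    (by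
      have hle : AddSubgroup.closure (relAdd C) ≤
          (FreeAbelianGroup.lift fun W : C => (Module.finrank K (B ⟶ W) : ℤ)).ker := by
        rw [AddSubgroup.closure_le]
        rintro x (⟨A₁, A₂, rfl⟩ | ⟨A₁, A₂, ⟨i⟩, rfl⟩)
        · simp only [SetLike.mem_coe, AddMonoidHom.mem_ker, map_add, map_sub,
            FreeAbelianGroup.lift_apply_of]
          rw [finrank_hom_biprod_right K homFin B A₁ A₂]
          push_cast
          ring
        · simp only [SetLike.mem_coe, AddMonoidHom.mem_ker, map_sub,
            FreeAbelianGroup.lift_apply_of]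
          rw [(Linear.homCongr K (Iso.refl B) i).finrank_eq]
          ring
      exact fun x hx => hle hx)

lemma covEval_cls (homFin : ∀ X Y : C, FiniteDimensional K (X ⟶ Y)) (B W : C) :
    covEval K homFin B (clsZero C W) = (Module.finrank K (W ⟶ B) : ℤ) := by
  have h1 : covEval K homFin B (clsZero C W)
      = (FreeAbelianGroup.lift fun W : C => (Module.finrank K (W ⟶ B) : ℤ))
          (FreeAbelianGroup.of W) :=
    QuotientAddGroup.lift_mk _ _ _
  rw [h1, FreeAbelianGroup.lift_apply_of]

lemma conEval_cls (homFin : ∀ X Y : C, FiniteDimensional K (X ⟶ Y)) (B W : C) :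
    conEval K homFin B (clsZero C W) = (Module.finrank K (B ⟶ W) : ℤ) := by
  have h1 : conEval K homFin B (clsZero C W)
      = (FreeAbelianGroup.lift fun W : C => (Module.finrank K (B ⟶ W) : ℤ))
          (FreeAbelianGroup.of W) :=
    QuotientAddGroup.lift_mk _ _ _
  rw [h1, FreeAbelianGroup.lift_apply_of]

end AuxEval

theorem stmt7 (C : Type u) [Category.{v} C] [Preadditive C] [HasZeroObject C] [HasShift C ℤ]
    [∀ n : ℤ, (shiftFunctor C n).Additive] [Pretriangulated C] [HasFiniteBiproducts C]
    (hKS : IsKrullSchmidt C) (K : Type w) [Field K] [Linear K C]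
    (homFin : ∀ X Y : C, FiniteDimensional K (X ⟶ Y))
    (T : Set C) (hT : IsClusterTilting C T)
    (hker : (psiTri C).ker = AddSubgroup.closure (arRelTri C)) :
    LocFinite C ∧ (∀ T₀ : C, T = addSet C T₀ → FinitelyManyIndec C) := by
  -- the closure of the triangle relations equals the closure of the AR relations
  have hclos : AddSubgroup.closure (triRel C) = AddSubgroup.closure (arRelTri C) := by
    have h0 : (psiTri C).ker = AddSubgroup.closure (triRel C) := QuotientAddGroup.ker_mk' _
    rw [← h0, hker]
  -- the element `[A] + [A[1]]` lies in the closure of the AR relations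
  have hxi0 : ∀ A : C, clsZero C A + clsZero C (A⟦(1 : ℤ)⟧) ∈
      AddSubgroup.closure (arRelTri C) := by
    intro A
    rw [← hclos]
    have h1 : clsZero C A + clsZero C (A⟦(1 : ℤ)⟧) - clsZero C (0 : C) ∈ triRel C :=
      ⟨(contractibleTriangle A).rotate,
        Pretriangulated.rot_of_distTriang _ (Pretriangulated.contractible_distinguished A),
        rfl⟩
    have h2 : clsZero C (0 : C) ∈ triRel C := by
      refine ⟨contractibleTriangle (0 : C),
        Pretriangulated.contractible_distinguished _, ?_⟩
      show clsZero C (0 : C) = clsZero C (0 : C) + clsZero C (0 : C) - clsZero C (0 : C)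
      abel
    have h3 := add_mem (AddSubgroup.subset_closure h1) (AddSubgroup.subset_closure h2)
    have h4 : clsZero C A + clsZero C (A⟦(1 : ℤ)⟧) =
        (clsZero C A + clsZero C (A⟦(1 : ℤ)⟧) - clsZero C (0 : C)) + clsZero C (0 : C) := by
      abel
    rw [h4]
    exact h3
  -- generator lemmas
  have hgen_cov : ∀ y ∈ arRelTri C, ∃ (n : ℕ) (L : Fin n → C), ∀ B : C, Indec B →
      covEval K homFin B y ≠ 0 → ∃ i, Nonempty (B ≅ L i) := by
    rintro y ⟨X, Y, Z, f, g, h, hAR, rfl⟩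
    refine ⟨2, ![X, X⟦(1 : ℤ)⟧], fun B hB hne => ?_⟩
    by_cases hb1 : Nonempty (B ≅ X)
    · exact ⟨0, by simpa using hb1⟩
    by_cases hb2 : Nonempty (B ≅ X⟦(1 : ℤ)⟧)
    · exact ⟨1, by simpa using hb2⟩
    exfalso
    apply hne
    have hd := defect_cov K homFin hAR B hB hb1 hb2
    rw [map_sub, map_add, covEval_cls, covEval_cls, covEval_cls, ← hd]
    push_cast
    ring
  have hgen_con : ∀ y ∈ arRelTri C, ∃ (n : ℕ) (L : Fin n → C), ∀ B : C, Indec B →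
      conEval K homFin B y ≠ 0 → ∃ i, Nonempty (B ≅ L i) := by
    rintro y ⟨X, Y, Z, f, g, h, hAR, rfl⟩
    refine ⟨2, ![Z, Z⟦(-1 : ℤ)⟧], fun B hB hne => ?_⟩
    by_cases hb1 : Nonempty (B ≅ Z)
    · exact ⟨0, by simpa using hb1⟩
    by_cases hb2 : Nonempty (B ≅ Z⟦(-1 : ℤ)⟧)
    · exact ⟨1, by simpa using hb2⟩
    exfalso
    apply hne
    have hd := defect_con K homFin hAR B hB hb1 hb2
    rw [map_sub, map_add, conEval_cls, conEval_cls, conEval_cls, ← hd]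
    push_cast
    ring
  -- local finiteness
  have hLF : LocFinite C := by
    intro A hA
    constructor
    · obtain ⟨n, L, hL⟩ := list_of_mem_closure (arRelTri C)
        (fun B => covEval K homFin B) hgen_cov (hxi0 A)
      refine ⟨n, L, fun B hB hex => ?_⟩
      obtain ⟨φ, hφ⟩ := hex
      apply hL B hB
      rw [map_add, covEval_cls, covEval_cls]
      haveI := homFin A B
      have hpos : 0 < Module.finrank K (A ⟶ B) :=
        Module.finrank_pos_iff.mpr (nontrivial_of_ne φ 0 hφ)
      push_cast
      omega
    · obtain ⟨n, L, hL⟩ := list_of_mem_closure (arRelTri C)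
        (fun B => conEval K homFin B) hgen_con (hxi0 A)
      refine ⟨n, L, fun B hB hex => ?_⟩
      obtain ⟨φ, hφ⟩ := hex
      apply hL B hB
      rw [map_add, conEval_cls, conEval_cls]
      haveI := homFin B A
      have hpos : 0 < Module.finrank K (B ⟶ A) :=
        Module.finrank_pos_iff.mpr (nontrivial_of_ne φ 0 hφ)
      push_cast
      omega
  refine ⟨hLF, ?_⟩
  -- finiteness of Ind(C) in the presence of a cluster tilting object
  intro T₀ hTT
  obtain ⟨m, t, hloc, ⟨γ⟩⟩ := hKS T₀
  have ht_ind : ∀ j, Indec (t j) := fun j => indec_of_isLocalRing _ (hloc j)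
  choose n L hL using fun j => (hLF (t j) (ht_ind j)).1
  -- a nonzero map out of `T₀` gives a nonzero map out of some `t j`
  have hcomp : ∀ (W : C) (u : T₀ ⟶ W), u ≠ 0 → ∃ j, ∃ φ : t j ⟶ W, φ ≠ 0 := by
    intro W u hu
    by_contra hc
    push_neg at hc
    apply hu
    have h0 : γ.inv ≫ u = 0 := by
      apply biproduct.hom_ext'
      intro j
      rw [comp_zero, ← Category.assoc]
      exact hc j _
    calc u = γ.hom ≫ (γ.inv ≫ u) := by rw [← Category.assoc, γ.hom_inv_id, Category.id_comp]
      _ = 0 := by rw [h0, comp_zero]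
  have hcompN : ∀ (k : ℕ) (W : C) (u : (⨁ fun _ : Fin k => T₀) ⟶ W), u ≠ 0 →
      ∃ j, ∃ φ : t j ⟶ W, φ ≠ 0 := by
    intro k W u hu
    by_contra hc
    push_neg at hc
    apply hu
    apply biproduct.hom_ext'
    intro i
    rw [comp_zero]
    by_contra hne
    obtain ⟨j, φ, hφ⟩ := hcomp W _ hne
    exact hφ (hc j φ)
  -- the finite list of candidate indecomposables
  refine ⟨Fintype.card ((Σ j : Fin m, Fin (n j)) ⊕ (Σ j : Fin m, Fin (n j))),
    (Sum.elim (fun s : Σ j : Fin m, Fin (n j) => L s.1 s.2)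
      (fun s : Σ j : Fin m, Fin (n j) => (L s.1 s.2)⟦(-1 : ℤ)⟧)) ∘
      (Fintype.equivFin ((Σ j : Fin m, Fin (n j)) ⊕ (Σ j : Fin m, Fin (n j)))).symm,
    ?_⟩
  intro X hX
  by_cases hc1 : ∃ j, ∃ φ : t j ⟶ X⟦(1 : ℤ)⟧, φ ≠ 0
  · obtain ⟨j, φ, hφ⟩ := hc1
    have hXs : Indec (X⟦(1 : ℤ)⟧) := indec_shift (1 : ℤ) hX
    obtain ⟨i, ⟨iso⟩⟩ := hL j _ hXs ⟨φ, hφ⟩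
    refine ⟨Fintype.equivFin _ (Sum.inr ⟨j, i⟩), ⟨?_⟩⟩
    have hiso : X ≅ (L j i)⟦(-1 : ℤ)⟧ :=
      ((shiftFunctorCompIsoId C (1 : ℤ) (-1 : ℤ) (by ring)).app X).symm ≪≫
        (shiftFunctor C (-1 : ℤ)).mapIso iso
    refine hiso ≪≫ eqToIso ?_
    rw [Function.comp_apply, Equiv.symm_apply_apply]
    rfl
  · push_neg at hc1
    have hXT : X ∈ T := by
      apply (hT.char_left X).mpr
      intro T' hT' φ
      rw [hTT] at hT'
      obtain ⟨k, Bc, ⟨β⟩⟩ := hT'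
      have hΦ : β.hom ≫ biprod.fst ≫ φ = 0 := by
        by_contra hne
        obtain ⟨j, ψ, hψ⟩ := hcompN k _ _ hne
        exact hψ (hc1 j ψ)
      calc φ = (biprod.inl ≫ β.inv) ≫ (β.hom ≫ biprod.fst ≫ φ) := by simp
        _ = 0 := by rw [hΦ, comp_zero]
    rw [hTT] at hXT
    obtain ⟨k, Bc, ⟨β⟩⟩ := hXT
    have hne : β.hom ≫ biprod.fst ≠ 0 := by
      intro h0
      apply hX.1
      rw [IsZero.iff_id_eq_zero]
      calc 𝟙 X = (biprod.inl ≫ β.inv) ≫ (β.hom ≫ biprod.fst) := by simp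
        _ = 0 := by rw [h0, comp_zero]
    obtain ⟨j, φ, hφ⟩ := hcompN k _ _ hne
    obtain ⟨i, ⟨iso⟩⟩ := hL j X hX ⟨φ, hφ⟩
    refine ⟨Fintype.equivFin _ (Sum.inl ⟨j, i⟩), ⟨iso ≪≫ eqToIso ?_⟩⟩
    rw [Function.comp_apply, Equiv.symm_apply_apply]
    rfl
end
end

section
/- Let C be a Krull-Schmidt, Hom-finite, K-linear triangulated category (K a field) with a cluster tilting subcategory T, and let X → Y --g--> τ^{-1}X --h--> X[1] be an Auslander-Reiten triangle in C. Then X ∉ T[1] if and only if h factors through an object of T[1]. -/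
open CategoryTheory CategoryTheory.Limits Opposite ZeroObject

attribute [local instance] CategoryTheory.Limits.hasBinaryBiproducts_of_finite_biproducts

universe w v u

noncomputable section

open CategoryTheory.Pretriangulated

theorem stmt8 (C : Type u) [Category.{v} C] [Preadditive C] [HasZeroObject C] [HasShift C ℤ]
    [∀ n : ℤ, (shiftFunctor C n).Additive] [Pretriangulated C] [HasFiniteBiproducts C]
    (hKS : IsKrullSchmidt C) (K : Type w) [Field K] [Linear K C]
    (homFin : ∀ X Y : C, FiniteDimensional K (X ⟶ Y))
    (T : Set C) (hT : IsClusterTilting C T)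
    (X Y Z : C) (f : X ⟶ Y) (g : Y ⟶ Z) (h : Z ⟶ X⟦(1 : ℤ)⟧)
    (hAR : IsARTriangle C f g h) :
    X ∉ shiftSet C T ↔ FactorsThruShift C T h := by
  have hdist := hAR.distinguished
  -- h ≠ 0 : otherwise g would be a retraction
  have hne : h ≠ 0 := by
    intro h0
    apply hAR.not_retraction
    obtain ⟨s, hs⟩ := Pretriangulated.Triangle.coyoneda_exact₃ _ hdist (𝟙 Z)
      (by show 𝟙 Z ≫ h = 0; rw [h0, comp_zero])
    exact ⟨s, hs.symm⟩
  constructor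
  · -- X ∉ T[1] ⟹ h factors through T[1]
    intro hX
    -- there is a nonzero map from some object of T to X
    have e : X⟦(-1 : ℤ)⟧⟦(1 : ℤ)⟧ ≅ X :=
      (shiftFunctorCompIsoId C (-1 : ℤ) (1 : ℤ) (by norm_num)).app X
    have hXm : X⟦(-1 : ℤ)⟧ ∉ T := by
      intro hmem
      exact hX ⟨X⟦(-1 : ℤ)⟧, hmem, ⟨e.symm⟩⟩
    have hexphi : ∃ t ∈ T, ∃ φ : t ⟶ X, φ ≠ 0 := by
      by_contra hcon
      push_neg at hcon
      apply hXm
      rw [hT.char_left]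
      intro T₀ hT₀ φ
      have h0 : φ ≫ e.hom = 0 := hcon T₀ hT₀ (φ ≫ e.hom)
      have : φ ≫ e.hom ≫ e.inv = 0 := by rw [← Category.assoc, h0, zero_comp]
      simpa using this
    obtain ⟨t₁, ht₁, φ, hφ⟩ := hexphi
    -- right T-approximation p : T₀ ⟶ X
    obtain ⟨T₀, hT₀, p, happrox⟩ := hT.contravariantly_finite X
    have hp : p ≠ 0 := by
      intro hp0
      obtain ⟨l, hl⟩ := happrox t₁ ht₁ φ
      exact hφ (by rw [← hl, hp0, comp_zero])
    -- cone triangle on p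
    obtain ⟨W, q, r, hWdist⟩ := Pretriangulated.distinguished_cocone_triangle p
    -- q is not a section
    have hqns : ¬ ∃ ρ : W ⟶ X, q ≫ ρ = 𝟙 X := by
      rintro ⟨ρ, hρ⟩
      apply hp
      have h1 : p ≫ q = 0 :=
        Pretriangulated.comp_distTriang_mor_zero₁₂ _ hWdist
      calc p = p ≫ q ≫ ρ := by rw [hρ, Category.comp_id]
        _ = 0 := by rw [← Category.assoc, h1, zero_comp]
    -- f left almost split: q factors through f
    obtain ⟨ψ, hψ⟩ := hAR.left_almost_split q hqns
    -- h ≫ f⟦1⟧ = 0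
    have hf1 : h ≫ (shiftFunctor C (1 : ℤ)).map f = 0 :=
      Pretriangulated.comp_distTriang_mor_zero₃₁ _ hdist
    have hq1 : h ≫ (shiftFunctor C (1 : ℤ)).map q = 0 := by
      rw [← hψ, Functor.map_comp, ← Category.assoc, hf1, zero_comp]
    -- exactness: h factors through T₀⟦1⟧
    have hrot := Pretriangulated.rot_of_distTriang _ hWdist
    obtain ⟨b, hb⟩ := Pretriangulated.Triangle.coyoneda_exact₁ _ hrot h
      hq1
    -- mor₃ of the rotated triangle is -p⟦1⟧
    refine ⟨T₀, hT₀, -b, (shiftFunctor C (1 : ℤ)).map p, ?_⟩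
    have : (Triangle.mk p q r).rotate.mor₃ = -(shiftFunctor C (1 : ℤ)).map p := rfl
    rw [hb, this]
    exact (Preadditive.neg_comp b _).trans (Preadditive.comp_neg b _).symm
  · -- h factors through T[1] ⟹ X ∉ T[1]
    rintro ⟨t', ht', u, v, huv⟩ ⟨t, ht, ⟨eX⟩⟩
    -- v : t'⟦1⟧ ⟶ X⟦1⟧ is the shift of some w : t' ⟶ X
    have hvw : (shiftFunctor C (1 : ℤ)).map ((shiftFunctor C (1 : ℤ)).preimage v) = v :=
      Functor.map_preimage _ _
    obtain ⟨w, hvw⟩ : ∃ w : t' ⟶ X, (shiftFunctor C (1 : ℤ)).map w = v :=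
      ⟨(shiftFunctor C (1 : ℤ)).preimage v, hvw⟩
    -- w ≫ eX.hom : t' ⟶ t⟦1⟧ is zero by char_left
    have hzero : w ≫ eX.hom = 0 := (hT.char_left t).1 ht t' ht' (w ≫ eX.hom)
    have hw0 : w = 0 := by
      have : w ≫ eX.hom ≫ eX.inv = 0 := by rw [← Category.assoc, hzero, zero_comp]
      simpa using this
    have hv0 : v = 0 := by rw [← hvw, hw0, Functor.map_zero]
    exact hne (by rw [← huv, hv0, comp_zero])
end
end

section
/- Let C be an essentially small triangulated category. Then there is a one-to-one correspondence between the dense triangulated subcategories of C and the subgroups H of the Grothendieck group K_0(C), sending a dense triangulated subcategory X to the subgroup generated by {[X] | X ∈ X}, with inverse sending a subgroup H to {A ∈ C | [A] ∈ H}. -/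
open CategoryTheory CategoryTheory.Limits Opposite ZeroObject

attribute [local instance] CategoryTheory.Limits.hasBinaryBiproducts_of_finite_biproducts

universe w v u

noncomputable section

open CategoryTheory.Pretriangulated

/-- A (full, isomorphism-closed) triangulated subcategory of `C`, given by its set of
objects: it contains `0`, is closed under isomorphisms, under the shift in both directions,
and under cones of morphisms. -/
structure IsTriangulatedSub (C : Type u) [Category.{v} C] [Preadditive C] [HasZeroObject C]
    [HasShift C ℤ] [∀ n : ℤ, (shiftFunctor C n).Additive] [Pretriangulated C]
    (S : Set C) : Prop where
  zero_mem : (0 : C) ∈ S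
  iso_closed : ∀ {A B : C}, A ∈ S → Nonempty (A ≅ B) → B ∈ S
  shift_iff : ∀ A : C, A ∈ S ↔ A⟦(1 : ℤ)⟧ ∈ S
  cone_mem : ∀ T : Triangle C, T ∈ (distTriang C) → T.obj₁ ∈ S → T.obj₂ ∈ S → T.obj₃ ∈ S

namespace Stmt15Aux

open CategoryTheory CategoryTheory.Limits CategoryTheory.Pretriangulated

set_option linter.unusedSectionVars false

variable {C : Type u} [Category.{v} C] [Preadditive C] [HasZeroObject C] [HasShift C ℤ]
  [∀ n : ℤ, (shiftFunctor C n).Additive] [Pretriangulated C] [HasFiniteBiproducts C]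

/-- Shift commutes with biproducts. -/
def shiftBiprod (n : ℤ) (X Y : C) : (X ⊞ Y)⟦n⟧ ≅ X⟦n⟧ ⊞ Y⟦n⟧ := by
  haveI : PreservesBinaryBiproduct X Y (shiftFunctor C n) :=
    preservesBinaryBiproduct_of_preservesBiproduct _ _ _
  exact Functor.mapBiprod _ X Y

/-- A binary biproduct is a `Bool`-indexed product. -/
def boolPiIso (g : Bool → C) : g true ⊞ g false ≅ ∏ᶜ g where
  hom := Pi.lift (fun b => match b with | true => biprod.fst | false => biprod.snd)
  inv := biprod.lift (Pi.π g true) (Pi.π g false)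
  hom_inv_id := by apply biprod.hom_ext <;> simp
  inv_hom_id := by apply Pi.hom_ext; rintro (_ | _) <;> simp

def removeZeroRight (X : C) {Z : C} (hZ : IsZero Z) : X ⊞ Z ≅ X where
  hom := biprod.fst
  inv := biprod.inl
  hom_inv_id := by
    apply biprod.hom_ext
    · simp
    · apply hZ.eq_of_tgt
  inv_hom_id := by simp

def removeZeroLeft (X : C) {Z : C} (hZ : IsZero Z) : Z ⊞ X ≅ X :=
  biprod.braiding Z X ≪≫ removeZeroRight X hZ

/-- The direct sum of two distinguished triangles is distinguished (up to isomorphism on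
the three objects). -/
lemma sum_dist {T₁ T₂ : Triangle C} (h₁ : T₁ ∈ distTriang C) (h₂ : T₂ ∈ distTriang C) :
    ∃ T ∈ distTriang C, Nonempty (T.obj₁ ≅ T₁.obj₁ ⊞ T₂.obj₁) ∧
      Nonempty (T.obj₂ ≅ T₁.obj₂ ⊞ T₂.obj₂) ∧ Nonempty (T.obj₃ ≅ T₁.obj₃ ⊞ T₂.obj₃) := by
  refine ⟨productTriangle (fun b : Bool => Bool.rec T₂ T₁ b),
    productTriangle_distinguished _ (fun b => Bool.rec h₂ h₁ b), ⟨?_⟩, ⟨?_⟩, ⟨?_⟩⟩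
  · exact (boolPiIso (fun b : Bool => (Bool.rec T₂ T₁ b : Triangle C).obj₁)).symm
  · exact (boolPiIso (fun b : Bool => (Bool.rec T₂ T₁ b : Triangle C).obj₂)).symm
  · exact (boolPiIso (fun b : Bool => (Bool.rec T₂ T₁ b : Triangle C).obj₃)).symm

variable {S : Set C}

lemma iso_mem (hS : IsTriangulatedSub C S) {A B : C} (h : A ∈ S) (e : A ≅ B) : B ∈ S :=
  hS.iso_closed h ⟨e⟩

lemma shift_mem (hS : IsTriangulatedSub C S) {A : C} (h : A ∈ S) : A⟦(1 : ℤ)⟧ ∈ S :=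
  (hS.shift_iff A).1 h

lemma unshift_mem (hS : IsTriangulatedSub C S) {A : C} (h : A ∈ S) : A⟦(-1 : ℤ)⟧ ∈ S := by
  refine (hS.shift_iff _).2 (iso_mem hS h ?_)
  exact ((shiftFunctorCompIsoId C (-1 : ℤ) (1 : ℤ) (by ring)).app A).symm

lemma biprod_mem (hS : IsTriangulatedSub C S) {A B : C} (hA : A ∈ S) (hB : B ∈ S) :
    (A ⊞ B) ∈ S := by
  have h1 : (binaryBiproductTriangle A B).rotate.rotate ∈ distTriang C :=
    rot_of_distTriang _ (rot_of_distTriang _ (binaryBiproductTriangle_distinguished A B))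
  refine (hS.shift_iff _).2 (hS.cone_mem _ h1 ?_ ?_)
  · exact hB
  · exact shift_mem hS hA

lemma self_shift_mem (hS : IsTriangulatedSub C S) (hD : DenseSub S) (x : C) :
    (x ⊞ x⟦(1 : ℤ)⟧) ∈ S := by
  obtain ⟨X₀, hX₀, c, ⟨e⟩⟩ := hD x
  have hxc : (x ⊞ c) ∈ S := iso_mem hS hX₀ e
  have hz : IsZero ((0 : C)⟦(-1 : ℤ)⟧) :=
    Functor.map_isZero _ (isZero_zero C)
  obtain ⟨U, hU, ⟨e₁⟩, ⟨e₂⟩, ⟨e₃⟩⟩ :=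
    sum_dist (rot_of_distTriang _ (contractible_distinguished x))
      (inv_rot_of_distTriang _ (contractible_distinguished x))
  -- e₁ : U.obj₁ ≅ x ⊞ (0 : C)⟦-1⟧, e₂ : U.obj₂ ≅ 0 ⊞ x, e₃ : U.obj₃ ≅ x⟦1⟧ ⊞ x
  obtain ⟨V, hV, ⟨f₁⟩, ⟨f₂⟩, ⟨f₃⟩⟩ := sum_dist hU (contractible_distinguished c)
  have hV1 : V.obj₁ ∈ S := iso_mem hS hxc
    (biprod.mapIso ((removeZeroRight x hz).symm ≪≫ e₁.symm) (Iso.refl c) ≪≫ f₁.symm)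
  have hV2 : V.obj₂ ∈ S := iso_mem hS hxc
    (biprod.mapIso ((removeZeroLeft x (isZero_zero C)).symm ≪≫ e₂.symm) (Iso.refl c) ≪≫ f₂.symm)
  have h3 : V.obj₃ ∈ S := hS.cone_mem V hV hV1 hV2
  exact iso_mem hS h3
    (f₃ ≪≫ biprod.mapIso e₃ (Iso.refl _) ≪≫ removeZeroRight _ (isZero_zero C) ≪≫
      biprod.braiding _ _)

/-- The stable equivalence relation: `x ∼ y` iff `x ⊞ b ≅ y ⊞ b'` for some `b, b' ∈ S`. -/
def mrel (S : Set C) (x y : C) : Prop :=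
  ∃ b ∈ S, ∃ b' ∈ S, Nonempty ((x ⊞ b) ≅ (y ⊞ b'))

lemma mrel_of_iso (h0 : (0 : C) ∈ S) {x y : C} (e : x ≅ y) : mrel S x y :=
  ⟨0, h0, 0, h0, ⟨biprod.mapIso e (Iso.refl _)⟩⟩

lemma mrel_symm {x y : C} (h : mrel S x y) : mrel S y x := by
  obtain ⟨b, hb, b', hb', ⟨e⟩⟩ := h
  exact ⟨b', hb', b, hb, ⟨e.symm⟩⟩

lemma mrel_trans (hS : IsTriangulatedSub C S) {x y z : C} (h : mrel S x y)
    (h' : mrel S y z) : mrel S x z := by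
  obtain ⟨b, hb, b', hb', ⟨e₁⟩⟩ := h
  obtain ⟨c, hc, c', hc', ⟨e₂⟩⟩ := h'
  refine ⟨b ⊞ c, biprod_mem hS hb hc, c' ⊞ b', biprod_mem hS hc' hb', ⟨?_⟩⟩
  calc x ⊞ (b ⊞ c) ≅ (x ⊞ b) ⊞ c := (biprod.associator _ _ _).symm
    _ ≅ (y ⊞ b') ⊞ c := biprod.mapIso e₁ (Iso.refl c)
    _ ≅ y ⊞ (b' ⊞ c) := biprod.associator _ _ _
    _ ≅ y ⊞ (c ⊞ b') := biprod.mapIso (Iso.refl y) (biprod.braiding _ _)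
    _ ≅ (y ⊞ c) ⊞ b' := (biprod.associator _ _ _).symm
    _ ≅ (z ⊞ c') ⊞ b' := biprod.mapIso e₂ (Iso.refl b')
    _ ≅ z ⊞ (c' ⊞ b') := biprod.associator _ _ _

/-- The middle four exchange for biproducts. -/
def middleFour (a b c d : C) : (a ⊞ b) ⊞ (c ⊞ d) ≅ (a ⊞ c) ⊞ (b ⊞ d) :=
  calc (a ⊞ b) ⊞ (c ⊞ d) ≅ a ⊞ (b ⊞ (c ⊞ d)) := biprod.associator _ _ _
    _ ≅ a ⊞ ((b ⊞ c) ⊞ d) := biprod.mapIso (Iso.refl a) (biprod.associator _ _ _).symm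
    _ ≅ a ⊞ ((c ⊞ b) ⊞ d) :=
        biprod.mapIso (Iso.refl a) (biprod.mapIso (biprod.braiding _ _) (Iso.refl d))
    _ ≅ a ⊞ (c ⊞ (b ⊞ d)) := biprod.mapIso (Iso.refl a) (biprod.associator _ _ _)
    _ ≅ (a ⊞ c) ⊞ (b ⊞ d) := (biprod.associator _ _ _).symm

lemma mrel_add (hS : IsTriangulatedSub C S) {a b c d : C} (h : mrel S a b)
    (h' : mrel S c d) : mrel S (a ⊞ c) (b ⊞ d) := by
  obtain ⟨s, hs, s', hs', ⟨e₁⟩⟩ := h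
  obtain ⟨t, ht, t', ht', ⟨e₂⟩⟩ := h'
  refine ⟨s ⊞ t, biprod_mem hS hs ht, s' ⊞ t', biprod_mem hS hs' ht', ⟨?_⟩⟩
  calc (a ⊞ c) ⊞ (s ⊞ t) ≅ (a ⊞ s) ⊞ (c ⊞ t) := middleFour a c s t
    _ ≅ (b ⊞ s') ⊞ (d ⊞ t') := biprod.mapIso e₁ e₂
    _ ≅ (b ⊞ d) ⊞ (s' ⊞ t') := middleFour b s' d t'

lemma mrel_shift (hS : IsTriangulatedSub C S) {a b : C} (h : mrel S a b) :
    mrel S (a⟦(1 : ℤ)⟧) (b⟦(1 : ℤ)⟧) := by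
  obtain ⟨s, hs, s', hs', ⟨e⟩⟩ := h
  refine ⟨s⟦(1 : ℤ)⟧, shift_mem hS hs, s'⟦(1 : ℤ)⟧, shift_mem hS hs', ⟨?_⟩⟩
  calc a⟦(1 : ℤ)⟧ ⊞ s⟦(1 : ℤ)⟧ ≅ (a ⊞ s)⟦(1 : ℤ)⟧ := (shiftBiprod 1 a s).symm
    _ ≅ (b ⊞ s')⟦(1 : ℤ)⟧ := (shiftFunctor C (1 : ℤ)).mapIso e
    _ ≅ b⟦(1 : ℤ)⟧ ⊞ s'⟦(1 : ℤ)⟧ := shiftBiprod 1 b s'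

/-- Key step: for every distinguished triangle, `obj₁ ⊞ obj₃ ∼ obj₂`. -/
lemma mrel_triangle (hS : IsTriangulatedSub C S) (hD : DenseSub S) (T : Triangle C)
    (hT : T ∈ distTriang C) : mrel S (T.obj₁ ⊞ T.obj₃) T.obj₂ := by
  obtain ⟨U, hU, ⟨e₁⟩, ⟨e₂⟩, ⟨e₃⟩⟩ :=
    sum_dist hT (rot_of_distTriang _ (contractible_distinguished T.obj₃))
  -- e₁ : U.obj₁ ≅ T.obj₁ ⊞ T.obj₃, e₂ : U.obj₂ ≅ T.obj₂ ⊞ 0,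
  -- e₃ : U.obj₃ ≅ T.obj₃ ⊞ T.obj₃⟦1⟧
  obtain ⟨X₀, hX₀, c, ⟨ec⟩⟩ := hD (T.obj₁ ⊞ T.obj₃)
  obtain ⟨V, hV, ⟨f₁⟩, ⟨f₂⟩, ⟨f₃⟩⟩ :=
    sum_dist (inv_rot_of_distTriang _ hU)
      (inv_rot_of_distTriang _ (contractible_distinguished c))
  -- f₁ : V.obj₁ ≅ U.obj₃⟦-1⟧ ⊞ 0⟦-1⟧, f₂ : V.obj₂ ≅ U.obj₁ ⊞ c, f₃ : V.obj₃ ≅ U.obj₂ ⊞ c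
  have hz : IsZero ((0 : C)⟦(-1 : ℤ)⟧) := Functor.map_isZero _ (isZero_zero C)
  have hU3 : U.obj₃ ∈ S := iso_mem hS (self_shift_mem hS hD T.obj₃) e₃.symm
  have hV1 : V.obj₁ ∈ S := iso_mem hS (unshift_mem hS hU3)
    ((removeZeroRight _ hz).symm ≪≫ f₁.symm)
  have hV2 : V.obj₂ ∈ S := iso_mem hS (iso_mem hS hX₀ ec)
    (biprod.mapIso e₁.symm (Iso.refl c) ≪≫ f₂.symm)
  have h3 : V.obj₃ ∈ S := hS.cone_mem V hV hV1 hV2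
  have hyc : (T.obj₂ ⊞ c) ∈ S := iso_mem hS h3
    (f₃ ≪≫ biprod.mapIso (e₂ ≪≫ removeZeroRight _ (isZero_zero C)) (Iso.refl c))
  refine ⟨T.obj₂ ⊞ c, hyc, (T.obj₁ ⊞ T.obj₃) ⊞ c, iso_mem hS hX₀ ec, ⟨?_⟩⟩
  calc (T.obj₁ ⊞ T.obj₃) ⊞ (T.obj₂ ⊞ c) ≅ (T.obj₂ ⊞ c) ⊞ (T.obj₁ ⊞ T.obj₃) :=
        biprod.braiding _ _
    _ ≅ T.obj₂ ⊞ (c ⊞ (T.obj₁ ⊞ T.obj₃)) := biprod.associator _ _ _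
    _ ≅ T.obj₂ ⊞ ((T.obj₁ ⊞ T.obj₃) ⊞ c) :=
        biprod.mapIso (Iso.refl _) (biprod.braiding _ _)

section K0

variable (C)

lemma clsZero_congr {A B : C} (e : A ≅ B) : clsZero C A = clsZero C B :=
  (QuotientAddGroup.eq_iff_sub_mem).2
    (AddSubgroup.subset_closure (Or.inr ⟨A, B, ⟨e⟩, rfl⟩))

lemma clsZero_add (A B : C) : clsZero C (A ⊞ B) = clsZero C A + clsZero C B := by
  show _ = QuotientAddGroup.mk _ + QuotientAddGroup.mk _
  rw [← QuotientAddGroup.mk_add]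
  refine (QuotientAddGroup.eq_iff_sub_mem).2 ?_
  have m : (FreeAbelianGroup.of A + FreeAbelianGroup.of B -
      FreeAbelianGroup.of (A ⊞ B)) ∈ AddSubgroup.closure (relAdd C) :=
    AddSubgroup.subset_closure (Or.inl ⟨A, B, rfl⟩)
  have m' := AddSubgroup.neg_mem _ m
  have he : -(FreeAbelianGroup.of A + FreeAbelianGroup.of B -
      FreeAbelianGroup.of (A ⊞ B)) = FreeAbelianGroup.of (A ⊞ B) -
      (FreeAbelianGroup.of A + FreeAbelianGroup.of B) := by abel
  rwa [he] at m'

lemma clsZero_zero : clsZero C (0 : C) = 0 := by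
  have h1 := clsZero_add C (0 : C) 0
  have h2 : clsZero C ((0 : C) ⊞ 0) = clsZero C 0 :=
    clsZero_congr C (removeZeroRight (0 : C) (isZero_zero C))
  rw [h2] at h1
  exact left_eq_add.mp h1

lemma k0_zero : k0clsTri C (0 : C) = 0 := by
  show psiTri C (clsZero C 0) = 0
  rw [clsZero_zero, map_zero]

lemma k0_congr {A B : C} (e : A ≅ B) : k0clsTri C A = k0clsTri C B := by
  show psiTri C _ = psiTri C _
  rw [clsZero_congr C e]

lemma k0_add (A B : C) : k0clsTri C (A ⊞ B) = k0clsTri C A + k0clsTri C B := by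
  show psiTri C _ = psiTri C _ + psiTri C _
  rw [clsZero_add, map_add]

lemma k0_triangle (T : Triangle C) (hT : T ∈ distTriang C) :
    k0clsTri C T.obj₂ = k0clsTri C T.obj₁ + k0clsTri C T.obj₃ := by
  have h : psiTri C (clsZero C T.obj₁ + clsZero C T.obj₃ - clsZero C T.obj₂) = 0 :=
    (QuotientAddGroup.eq_zero_iff _).2 (AddSubgroup.subset_closure ⟨T, hT, rfl⟩)
  rw [map_sub, map_add] at h
  exact (sub_eq_zero.mp h).symm

lemma k0_shift (A : C) : k0clsTri C (A⟦(1 : ℤ)⟧) = - k0clsTri C A := by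
  have h : k0clsTri C (0 : C) = k0clsTri C A + k0clsTri C (A⟦(1 : ℤ)⟧) :=
    k0_triangle C _ (rot_of_distTriang _ (contractible_distinguished A))
  rw [k0_zero] at h
  exact eq_neg_of_add_eq_zero_right h.symm

lemma k0_surj (x : K0Tri C) : ∃ A : C, x = k0clsTri C A := by
  obtain ⟨y, rfl⟩ := QuotientAddGroup.mk_surjective x
  obtain ⟨f, rfl⟩ := QuotientAddGroup.mk_surjective y
  induction f using FreeAbelianGroup.induction_on with
  | zero =>
      refine ⟨0, ?_⟩
      rw [k0_zero]
      simp
  | of A => exact ⟨A, rfl⟩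
  | neg A _ =>
      refine ⟨A⟦(1 : ℤ)⟧, ?_⟩
      rw [k0_shift]
      show QuotientAddGroup.mk (QuotientAddGroup.mk _) = _
      have : ∀ g : FreeAbelianGroup C,
          (QuotientAddGroup.mk (QuotientAddGroup.mk g : K0Zero C) : K0Tri C) =
            psiTri C (QuotientAddGroup.mk g) := fun _ => rfl
      rw [this, show ((-FreeAbelianGroup.of A : FreeAbelianGroup C)) =
        -(FreeAbelianGroup.of A) from rfl]
      simp only [QuotientAddGroup.mk_neg, map_neg]
      rfl
  | add f g hf hg =>
      obtain ⟨A, hA⟩ := hf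
      obtain ⟨B, hB⟩ := hg
      refine ⟨A ⊞ B, ?_⟩
      rw [k0_add, ← hA, ← hB]
      simp only [QuotientAddGroup.mk_add, map_add]

end K0

/-- Thomason's theorem, hard direction: if `[A]` lies in the subgroup of `K₀(C)` generated
by the classes of objects of the dense triangulated subcategory `S`, then `A ∈ S`. -/
lemma mem_of_k0 {S : Set C} (hS : IsTriangulatedSub C S) (hD : DenseSub S) {A : C}
    (h : k0clsTri C A ∈ AddSubgroup.closure (k0clsTri C '' S)) : A ∈ S := by
  letI sd : Setoid C :=
    ⟨mrel S, ⟨fun x => mrel_of_iso hS.zero_mem (Iso.refl x),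
      fun h => mrel_symm h, fun h h' => mrel_trans hS h h'⟩⟩
  letI : Zero (Quotient sd) := ⟨Quotient.mk sd 0⟩
  letI : Add (Quotient sd) :=
    ⟨fun x y => Quotient.map₂ (· ⊞ ·) (fun _ _ h _ _ h' => mrel_add hS h h') x y⟩
  letI : Neg (Quotient sd) :=
    ⟨Quotient.map (fun x => x⟦(1 : ℤ)⟧) (fun _ _ h => mrel_shift hS h)⟩
  letI : AddCommGroup (Quotient sd) :=
    { add := (· + ·)
      zero := 0
      neg := Neg.neg
      nsmul := nsmulRec
      zsmul := zsmulRec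
      add_assoc := fun x y z => Quotient.inductionOn₃ x y z (fun a b c =>
        Quotient.sound (mrel_of_iso hS.zero_mem (biprod.associator a b c)))
      zero_add := fun x => Quotient.inductionOn x (fun a =>
        Quotient.sound (mrel_of_iso hS.zero_mem (removeZeroLeft a (isZero_zero C))))
      add_zero := fun x => Quotient.inductionOn x (fun a =>
        Quotient.sound (mrel_of_iso hS.zero_mem (removeZeroRight a (isZero_zero C))))
      add_comm := fun x y => Quotient.inductionOn₂ x y (fun a b =>
        Quotient.sound (mrel_of_iso hS.zero_mem (biprod.braiding a b)))
      neg_add_cancel := fun x => Quotient.inductionOn x (fun a => Quotient.sound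
        ⟨0, hS.zero_mem, a ⊞ a⟦(1 : ℤ)⟧, self_shift_mem hS hD a,
          ⟨removeZeroRight _ (isZero_zero C) ≪≫ biprod.braiding _ _ ≪≫
            (removeZeroLeft _ (isZero_zero C)).symm⟩⟩) }
  let φ : FreeAbelianGroup C →+ Quotient sd :=
    FreeAbelianGroup.lift (fun X => Quotient.mk sd X)
  have hφof : ∀ X : C, φ (FreeAbelianGroup.of X) = Quotient.mk sd X :=
    fun X => FreeAbelianGroup.lift_apply_of _ _
  have hadd : ∀ X Y : C,
      Quotient.mk sd X + Quotient.mk sd Y = Quotient.mk sd (X ⊞ Y) := fun X Y => rfl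
  have h1 : AddSubgroup.closure (relAdd C) ≤ φ.ker := by
    rw [AddSubgroup.closure_le]
    rintro x (⟨X, Y, rfl⟩ | ⟨X, Y, ⟨e⟩, rfl⟩) <;>
      simp only [SetLike.mem_coe, AddMonoidHom.mem_ker, map_sub, map_add, hφof]
    · rw [hadd]; exact sub_self _
    · rw [sub_eq_zero]; exact Quotient.sound (mrel_of_iso hS.zero_mem e)
  let φ1 : K0Zero C →+ Quotient sd := QuotientAddGroup.lift _ φ h1
  have hφ1 : ∀ X : C, φ1 (clsZero C X) = Quotient.mk sd X := fun X => by
    show φ1 (QuotientAddGroup.mk _) = _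
    rw [QuotientAddGroup.lift_mk]
    exact hφof X
  have h2 : AddSubgroup.closure (triRel C) ≤ φ1.ker := by
    rw [AddSubgroup.closure_le]
    rintro x ⟨T, hT, rfl⟩
    simp only [SetLike.mem_coe, AddMonoidHom.mem_ker, map_sub, map_add, hφ1]
    rw [hadd, sub_eq_zero]
    exact Quotient.sound (mrel_triangle hS hD T hT)
  let φ2 : K0Tri C →+ Quotient sd := QuotientAddGroup.lift _ φ1 h2
  have hφ2 : ∀ X : C, φ2 (k0clsTri C X) = Quotient.mk sd X := fun X => by
    show φ2 (QuotientAddGroup.mk (clsZero C X)) = _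
    rw [QuotientAddGroup.lift_mk]
    exact hφ1 X
  have hker : AddSubgroup.closure (k0clsTri C '' S) ≤ φ2.ker := by
    rw [AddSubgroup.closure_le]
    rintro x ⟨B, hB, rfl⟩
    simp only [SetLike.mem_coe, AddMonoidHom.mem_ker, hφ2]
    exact Quotient.sound ⟨0, hS.zero_mem, B, hB,
      ⟨removeZeroRight _ (isZero_zero C) ≪≫ (removeZeroLeft _ (isZero_zero C)).symm⟩⟩
  have h0 : φ2 (k0clsTri C A) = 0 := hker h
  rw [hφ2] at h0
  have hA0 : mrel S A 0 := Quotient.exact h0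
  obtain ⟨b, hb, b', hb', ⟨e⟩⟩ := hA0
  have hbA : (b ⊞ A) ∈ S := iso_mem hS hb'
    ((removeZeroLeft b' (isZero_zero C)).symm ≪≫ e.symm ≪≫ biprod.braiding A b)
  exact hS.cone_mem (binaryBiproductTriangle b A)
    (binaryBiproductTriangle_distinguished b A) hb hbA

end Stmt15Aux
theorem stmt15 (C : Type u) [Category.{v} C] [Preadditive C] [HasZeroObject C]
    [HasShift C ℤ] [∀ n : ℤ, (shiftFunctor C n).Additive] [Pretriangulated C]
    [HasFiniteBiproducts C] [EssentiallySmall.{w} C] :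
    (∀ S : Set C, IsTriangulatedSub C S → DenseSub S →
        {A : C | k0clsTri C A ∈ AddSubgroup.closure (k0clsTri C '' S)} = S) ∧
    (∀ H : AddSubgroup (K0Tri C),
        IsTriangulatedSub C {A : C | k0clsTri C A ∈ H} ∧
        DenseSub {A : C | k0clsTri C A ∈ H} ∧
        AddSubgroup.closure (k0clsTri C '' {A : C | k0clsTri C A ∈ H}) = H) := by
  constructor
  · intro S hTS hD
    ext A
    simp only [Set.mem_setOf_eq]
    exact ⟨fun h => Stmt15Aux.mem_of_k0 hTS hD h,
      fun hA => AddSubgroup.subset_closure ⟨A, hA, rfl⟩⟩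
  · intro H
    refine ⟨⟨?_, ?_, ?_, ?_⟩, ?_, ?_⟩
    · show k0clsTri C 0 ∈ H
      rw [Stmt15Aux.k0_zero]
      exact H.zero_mem
    · rintro A B hA ⟨e⟩
      show k0clsTri C B ∈ H
      rwa [← Stmt15Aux.k0_congr C e]
    · intro A
      show k0clsTri C A ∈ H ↔ k0clsTri C (A⟦(1 : ℤ)⟧) ∈ H
      rw [Stmt15Aux.k0_shift, neg_mem_iff]
    · intro T hT h1 h2
      show k0clsTri C T.obj₃ ∈ H
      have h := Stmt15Aux.k0_triangle C T hT
      have he : k0clsTri C T.obj₃ = k0clsTri C T.obj₂ - k0clsTri C T.obj₁ := by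
        rw [h]; abel
      rw [he]
      exact sub_mem h2 h1
    · intro A
      refine ⟨A ⊞ A⟦(1 : ℤ)⟧, ?_, A⟦(1 : ℤ)⟧, ⟨Iso.refl _⟩⟩
      show k0clsTri C _ ∈ H
      rw [Stmt15Aux.k0_add, Stmt15Aux.k0_shift, add_neg_cancel]
      exact H.zero_mem
    · refine le_antisymm ?_ ?_
      · rw [AddSubgroup.closure_le]
        rintro x ⟨B, hB, rfl⟩
        exact hB
      · intro x hx
        obtain ⟨A, rfl⟩ := Stmt15Aux.k0_surj C x
        exact AddSubgroup.subset_closure ⟨A, hx, rfl⟩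
end
end
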